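/- Let ρ: A → U(V) be an irreducible representation of a compact normal subgroup A ⊴ G with stabilizer G_[ρ]. There exists a unique group homomorphism Υ: G_[ρ] → PU(V) such that Υ(a) = p(ρ(a)) for all a ∈ A, where p: U(V) → PU(V) is the quotient map, and such that for each g ∈ G_[ρ], any lift u ∈ U(V) of Υ(g) satisfies ρ(g⁻¹ a g) = u⁻¹ ρ(a) u for all a ∈ A. -/
import Mathlib


noncomputable section

variable {G : Type*} [Group G] {V : Type*} [NormedAddCommGroup V] [InnerProductSpace ℂ V]

/-- If `A` is normal and `a ∈ A`, then `g⁻¹ * a * g ∈ A`. -/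
theorem conjMem (A : Subgroup G) (hA : A.Normal) (g : G) (a : A) :
    g⁻¹ * (a : G) * g ∈ A := by
  simpa using hA.conj_mem (a : G) a.2 g⁻¹

/-- The conjugate representation `(g · ρ)(a) = ρ(g⁻¹ a g)`. -/
def conjRep (A : Subgroup G) (hA : A.Normal) (g : G) (ρ : A →* (V ≃ₗᵢ[ℂ] V)) :
    A →* (V ≃ₗᵢ[ℂ] V) where
  toFun a := ρ ⟨g⁻¹ * (a : G) * g, conjMem A hA g a⟩
  map_one' := by
    have h : (⟨g⁻¹ * ((1 : A) : G) * g, conjMem A hA g 1⟩ : A) = 1 := by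
      ext; simp
    show ρ ⟨g⁻¹ * ((1 : A) : G) * g, conjMem A hA g 1⟩ = 1
    rw [h, map_one]
  map_mul' a b := by
    have key : (⟨g⁻¹ * ((a * b : A) : G) * g, conjMem A hA g (a * b)⟩ : A)
        = ⟨g⁻¹ * (a : G) * g, conjMem A hA g a⟩ * ⟨g⁻¹ * (b : G) * g, conjMem A hA g b⟩ := by
      ext; push_cast; group
    show ρ ⟨g⁻¹ * ((a * b : A) : G) * g, conjMem A hA g (a * b)⟩ = _
    rw [key, map_mul]

/-- A unitary representation is irreducible if its only invariant subspaces are `⊥` and `⊤`. -/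
def IsIrreducibleRep {H : Type*} [Group H] (ρ : H →* (V ≃ₗᵢ[ℂ] V)) : Prop :=
  ∀ W : Submodule ℂ V, (∀ h : H, ∀ v ∈ W, ρ h v ∈ W) → W = ⊥ ∨ W = ⊤

/-- Unitary equivalence of two unitary representations on the same space. -/
def UnitaryEquivRep {H : Type*} [Group H] (ρ σ : H →* (V ≃ₗᵢ[ℂ] V)) : Prop :=
  ∃ U : V ≃ₗᵢ[ℂ] V, ∀ h : H, σ h = U * ρ h * U⁻¹

/-- The stabilizer `G_[ρ]` of the isomorphism class of `ρ` under conjugation. -/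
def stab (A : Subgroup G) (hA : A.Normal) (ρ : A →* (V ≃ₗᵢ[ℂ] V)) : Subgroup G where
  carrier := {g : G | ∃ u : V ≃ₗᵢ[ℂ] V,
    ∀ a : A, ρ ⟨g⁻¹ * (a : G) * g, conjMem A hA g a⟩ = u⁻¹ * ρ a * u}
  one_mem' := by
    refine ⟨1, fun a => ?_⟩
    have h : (⟨(1 : G)⁻¹ * (a : G) * 1, conjMem A hA 1 a⟩ : A) = a := by ext; simp
    rw [h]; simp
  mul_mem' := by
    rintro g h ⟨u, hu⟩ ⟨w, hw⟩
    refine ⟨u * w, fun a => ?_⟩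
    have key : (⟨(g * h)⁻¹ * (a : G) * (g * h), conjMem A hA (g * h) a⟩ : A)
        = ⟨h⁻¹ * ((⟨g⁻¹ * (a : G) * g, conjMem A hA g a⟩ : A) : G) * h,
            conjMem A hA h _⟩ := by
      ext; push_cast; group
    rw [key, hw, hu]
    simp [mul_assoc]
  inv_mem' := by
    rintro g ⟨u, hu⟩
    refine ⟨u⁻¹, fun a => ?_⟩
    have h2 := hu ⟨g⁻¹⁻¹ * (a : G) * g⁻¹, conjMem A hA g⁻¹ a⟩
    have key : (⟨g⁻¹ * ((⟨g⁻¹⁻¹ * (a : G) * g⁻¹, conjMem A hA g⁻¹ a⟩ : A) : G) * g,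
        conjMem A hA g _⟩ : A) = a := by ext; push_cast; group
    rw [key] at h2
    have := congrArg (fun z => u * z * u⁻¹) h2
    simpa [mul_assoc] using this.symm

/-- The group `G̃_[ρ]`, realized inside `G × U(V)` as the pairs `(g, u)` such that
conjugation of `ρ` by `g` equals conjugation by `u`; equivalently `Υ(g) = p(u)`. -/
def gtil (A : Subgroup G) (hA : A.Normal) (ρ : A →* (V ≃ₗᵢ[ℂ] V)) :
    Subgroup (G × (V ≃ₗᵢ[ℂ] V)) where
  carrier := {x | ∀ a : A,
    ρ ⟨x.1⁻¹ * (a : G) * x.1, conjMem A hA x.1 a⟩ = x.2⁻¹ * ρ a * x.2}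
  one_mem' := by
    intro a
    have h : (⟨((1 : G × (V ≃ₗᵢ[ℂ] V)).1)⁻¹ * (a : G) * (1 : G × (V ≃ₗᵢ[ℂ] V)).1,
        conjMem A hA _ a⟩ : A) = a := by ext; simp
    rw [h]; simp
  mul_mem' := by
    rintro ⟨g, u⟩ ⟨h, w⟩ hgu hhw a
    have key : (⟨(g * h)⁻¹ * (a : G) * (g * h), conjMem A hA (g * h) a⟩ : A)
        = ⟨h⁻¹ * ((⟨g⁻¹ * (a : G) * g, conjMem A hA g a⟩ : A) : G) * h,
            conjMem A hA h _⟩ := by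
      ext; push_cast; group
    show ρ ⟨(g * h)⁻¹ * (a : G) * (g * h), conjMem A hA (g * h) a⟩
        = (u * w)⁻¹ * ρ a * (u * w)
    rw [key, hhw ⟨g⁻¹ * (a : G) * g, conjMem A hA g a⟩, hgu a]
    simp [mul_assoc]
  inv_mem' := by
    rintro ⟨g, u⟩ hgu a
    have h2 := hgu ⟨g⁻¹⁻¹ * (a : G) * g⁻¹, conjMem A hA g⁻¹ a⟩
    have key : (⟨g⁻¹ * ((⟨g⁻¹⁻¹ * (a : G) * g⁻¹, conjMem A hA g⁻¹ a⟩ : A) : G) * g,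
        conjMem A hA g _⟩ : A) = a := by ext; push_cast; group
    rw [key] at h2
    show ρ ⟨g⁻¹⁻¹ * (a : G) * g⁻¹, conjMem A hA g⁻¹ a⟩ = u⁻¹⁻¹ * ρ a * u⁻¹
    have := congrArg (fun z => u * z * u⁻¹) h2
    simpa [mul_assoc] using this.symm

/-- Multiplication by a unit scalar as a linear isometry equivalence. -/
def scalarIsom (c : ℂ) (hc : ‖c‖ = 1) : V ≃ₗᵢ[ℂ] V :=
  { toFun := fun v => c • v
    invFun := fun v => c⁻¹ • v
    map_add' := fun v w => smul_add c v w
    map_smul' := fun r v => smul_comm c r v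
    left_inv := fun v => by
      have hc0 : c ≠ 0 := by intro h; rw [h] at hc; simp at hc
      simp [smul_smul, inv_mul_cancel₀ hc0]
    right_inv := fun v => by
      have hc0 : c ≠ 0 := by intro h; rw [h] at hc; simp at hc
      simp [smul_smul, mul_inv_cancel₀ hc0]
    norm_map' := fun v => by simp [norm_smul, hc] }

/-- The subgroup of scalar unitaries `S¹ ⊆ U(V)`. -/
def ScalarSub (V : Type*) [NormedAddCommGroup V] [InnerProductSpace ℂ V] :
    Subgroup (V ≃ₗᵢ[ℂ] V) where
  carrier := {u | ∃ c : ℂ, ∀ v, u v = c • v}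
  one_mem' := ⟨1, fun v => by simp⟩
  mul_mem' := by
    rintro u w ⟨c, hc⟩ ⟨d, hd⟩
    refine ⟨c * d, fun v => ?_⟩
    show u (w v) = (c * d) • v
    rw [hd, hc, smul_smul]
  inv_mem' := by
    rintro u ⟨c, hc⟩
    rcases eq_or_ne c 0 with h0 | h0
    · refine ⟨1, fun v => ?_⟩
      have hz : ∀ w : V, w = 0 := fun w => by
        have h1 : u w = u 0 := by rw [hc w, h0, zero_smul, map_zero]
        simpa using u.injective h1
      rw [hz (u⁻¹ v), hz v, smul_zero]
    · refine ⟨c⁻¹, fun v => ?_⟩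
      apply u.injective
      have huu : u (u⁻¹ v) = v := by
        have h1 : (u * u⁻¹) v = v := by rw [mul_inv_cancel]; rfl
        simpa using h1
      rw [huu, map_smul, hc, smul_smul, inv_mul_cancel₀ h0, one_smul]

instance scalarSub_normal (V : Type*) [NormedAddCommGroup V] [InnerProductSpace ℂ V] :
    (ScalarSub V).Normal := by
  constructor
  rintro u ⟨c, hc⟩ g
  refine ⟨c, fun v => ?_⟩
  show g (u (g⁻¹ v)) = c • v
  rw [hc, map_smul]
  congr 1
  have h1 : (g * g⁻¹) v = v := by rw [mul_inv_cancel]; rfl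
  simpa using h1


/-- `u` implements the conjugation of `ρ` by `g`. -/
def Impl (A : Subgroup G) (hA : A.Normal) (ρ : A →* (V ≃ₗᵢ[ℂ] V)) (g : G)
    (u : V ≃ₗᵢ[ℂ] V) : Prop :=
  ∀ a : A, ρ ⟨g⁻¹ * (a : G) * g, conjMem A hA g a⟩ = u⁻¹ * ρ a * u

theorem mem_stab_iff (A : Subgroup G) (hA : A.Normal) (ρ : A →* (V ≃ₗᵢ[ℂ] V)) (g : G) :
    g ∈ stab A hA ρ ↔ ∃ u, Impl A hA ρ g u := Iff.rfl

theorem impl_one (A : Subgroup G) (hA : A.Normal) (ρ : A →* (V ≃ₗᵢ[ℂ] V)) :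
    Impl A hA ρ 1 1 := by
  intro a
  have h : (⟨(1 : G)⁻¹ * (a : G) * 1, conjMem A hA 1 a⟩ : A) = a := by ext; simp
  rw [h]; simp

theorem impl_mul (A : Subgroup G) (hA : A.Normal) (ρ : A →* (V ≃ₗᵢ[ℂ] V))
    {g h : G} {u w : V ≃ₗᵢ[ℂ] V} (hu : Impl A hA ρ g u) (hw : Impl A hA ρ h w) :
    Impl A hA ρ (g * h) (u * w) := by
  intro a
  have key : (⟨(g * h)⁻¹ * (a : G) * (g * h), conjMem A hA (g * h) a⟩ : A)
      = ⟨h⁻¹ * ((⟨g⁻¹ * (a : G) * g, conjMem A hA g a⟩ : A) : G) * h,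
          conjMem A hA h _⟩ := by
    ext; push_cast; group
  rw [key, hw ⟨g⁻¹ * (a : G) * g, conjMem A hA g a⟩, hu a]
  simp [mul_assoc]

theorem impl_rho (A : Subgroup G) (hA : A.Normal) (ρ : A →* (V ≃ₗᵢ[ℂ] V))
    (a : G) (ha : a ∈ A) : Impl A hA ρ a (ρ ⟨a, ha⟩) := by
  intro b
  have key : (⟨a⁻¹ * (b : G) * a, conjMem A hA a b⟩ : A)
      = (⟨a, ha⟩ : A)⁻¹ * b * ⟨a, ha⟩ := by ext; rfl
  rw [key, map_mul, map_mul, map_inv]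

/-- Scalars are central in `U(V)`. -/
theorem scalar_central (s : V ≃ₗᵢ[ℂ] V) (hs : s ∈ ScalarSub V) (T : V ≃ₗᵢ[ℂ] V) :
    T * s = s * T := by
  obtain ⟨c, hc⟩ := hs
  ext v
  show T (s v) = s (T v)
  rw [hc, hc, map_smul]

/-- Schur: a unitary commuting with an irreducible representation is scalar. -/
theorem schur_scalar [FiniteDimensional ℂ V] {H : Type*} [Group H]
    (ρ : H →* (V ≃ₗᵢ[ℂ] V)) (hρ : IsIrreducibleRep ρ) (T : V ≃ₗᵢ[ℂ] V)
    (hT : ∀ h : H, T * ρ h = ρ h * T) : T ∈ ScalarSub V := by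
  rcases subsingleton_or_nontrivial V with hV | hV
  · exact ⟨1, fun v => Subsingleton.elim _ _⟩
  · set f : Module.End ℂ V := (T.toLinearEquiv : V →ₗ[ℂ] V) with hf
    obtain ⟨c, hc⟩ := Module.End.exists_eigenvalue f
    have hinv : ∀ (h : H) (v : V), v ∈ f.eigenspace c → (ρ h) v ∈ f.eigenspace c := by
      intro h v hv
      rw [Module.End.mem_eigenspace_iff] at hv ⊢
      have h1 : T ((ρ h) v) = (ρ h) (T v) := by
        have h3 := congrArg (fun e => (e : V ≃ₗᵢ[ℂ] V) v) (hT h)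
        simpa using h3
      show T ((ρ h) v) = c • (ρ h) v
      have h2 : T v = c • v := hv
      rw [h1, h2, map_smul]
    have hWtop : f.eigenspace c = ⊤ := by
      rcases hρ (f.eigenspace c) (fun h v hv => hinv h v hv) with hbot | htop
      · exact absurd hbot hc
      · exact htop
    refine ⟨c, fun v => ?_⟩
    exact Module.End.mem_eigenspace_iff.mp (hWtop ▸ Submodule.mem_top)

/-- Two implementers of the same `g` differ by a scalar. -/
theorem impl_unique [FiniteDimensional ℂ V] (A : Subgroup G) (hA : A.Normal)
    (ρ : A →* (V ≃ₗᵢ[ℂ] V)) (hρ : IsIrreducibleRep ρ) {g : G} {u w : V ≃ₗᵢ[ℂ] V}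
    (hu : Impl A hA ρ g u) (hw : Impl A hA ρ g w) :
    (QuotientGroup.mk u : (V ≃ₗᵢ[ℂ] V) ⧸ ScalarSub V) = QuotientGroup.mk w := by
  rw [QuotientGroup.eq]
  have hcomm : ∀ a : A, (w * u⁻¹) * ρ a = ρ a * (w * u⁻¹) := by
    intro a
    have E : u⁻¹ * ρ a * u = w⁻¹ * ρ a * w := (hu a).symm.trans (hw a)
    calc (w * u⁻¹) * ρ a = w * (u⁻¹ * ρ a * u) * u⁻¹ := by group
      _ = w * (w⁻¹ * ρ a * w) * u⁻¹ := by rw [E]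
      _ = ρ a * (w * u⁻¹) := by group
  have hS : w * u⁻¹ ∈ ScalarSub V := schur_scalar ρ hρ _ hcomm
  have h2 := (scalarSub_normal V).conj_mem _ hS w⁻¹
  simpa [mul_assoc] using h2

theorem impl_congr [FiniteDimensional ℂ V] (A : Subgroup G) (hA : A.Normal)
    (ρ : A →* (V ≃ₗᵢ[ℂ] V)) {g : G} {u w : V ≃ₗᵢ[ℂ] V}
    (hu : Impl A hA ρ g u)
    (h : (QuotientGroup.mk u : (V ≃ₗᵢ[ℂ] V) ⧸ ScalarSub V) = QuotientGroup.mk w) :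
    Impl A hA ρ g w := by
  rw [QuotientGroup.eq] at h
  set s := u⁻¹ * w with hs
  have hw : w = u * s := by rw [hs, mul_inv_cancel_left]
  intro a
  rw [hu a]
  calc u⁻¹ * ρ a * u = s⁻¹ * (s * (u⁻¹ * ρ a * u)) := by group
    _ = s⁻¹ * ((u⁻¹ * ρ a * u) * s) := by rw [scalar_central s h]
    _ = w⁻¹ * ρ a * w := by rw [hw]; group

/-- A chosen implementer for each `g ∈ G_[ρ]`. -/
def implChoice (A : Subgroup G) (hA : A.Normal) (ρ : A →* (V ≃ₗᵢ[ℂ] V))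
    (g : ↥(stab A hA ρ)) : V ≃ₗᵢ[ℂ] V :=
  ((mem_stab_iff A hA ρ (g : G)).mp g.2).choose

theorem implChoice_spec (A : Subgroup G) (hA : A.Normal) (ρ : A →* (V ≃ₗᵢ[ℂ] V))
    (g : ↥(stab A hA ρ)) : Impl A hA ρ (g : G) (implChoice A hA ρ g) :=
  ((mem_stab_iff A hA ρ (g : G)).mp g.2).choose_spec

/-- The homomorphism `Υ : G_[ρ] → PU(V)`. -/
def Ups [FiniteDimensional ℂ V] (A : Subgroup G) (hA : A.Normal)
    (ρ : A →* (V ≃ₗᵢ[ℂ] V)) (hρ : IsIrreducibleRep ρ) :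
    ↥(stab A hA ρ) →* ((V ≃ₗᵢ[ℂ] V) ⧸ ScalarSub V) where
  toFun g := QuotientGroup.mk (implChoice A hA ρ g)
  map_one' := by
    have h1 : Impl A hA ρ ((1 : ↥(stab A hA ρ)) : G) 1 := impl_one A hA ρ
    show (QuotientGroup.mk (implChoice A hA ρ 1) : (V ≃ₗᵢ[ℂ] V) ⧸ ScalarSub V) = 1
    rw [impl_unique A hA ρ hρ (implChoice_spec A hA ρ 1) h1, QuotientGroup.mk_one]
  map_mul' g h := by
    have h1 : Impl A hA ρ ((g * h : ↥(stab A hA ρ)) : G)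
        (implChoice A hA ρ g * implChoice A hA ρ h) :=
      impl_mul A hA ρ (implChoice_spec A hA ρ g) (implChoice_spec A hA ρ h)
    show (QuotientGroup.mk (implChoice A hA ρ (g * h)) : (V ≃ₗᵢ[ℂ] V) ⧸ ScalarSub V)
      = QuotientGroup.mk (implChoice A hA ρ g) * QuotientGroup.mk (implChoice A hA ρ h)
    rw [impl_unique A hA ρ hρ (implChoice_spec A hA ρ (g * h)) h1]
    rfl

theorem Ups_apply [FiniteDimensional ℂ V] (A : Subgroup G) (hA : A.Normal)
    (ρ : A →* (V ≃ₗᵢ[ℂ] V)) (hρ : IsIrreducibleRep ρ) (g : ↥(stab A hA ρ)) :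
    Ups A hA ρ hρ g = QuotientGroup.mk (implChoice A hA ρ g) := rfl

/-- there is a unique homomorphism `Υ : G_[ρ] → PU(V)` such that
`Υ(a) = p(ρ(a))` for `a ∈ A`, where `p : U(V) → PU(V) = U(V)/S¹` is the quotient map,
and such that any unitary lift `u` of `Υ(g)` implements the conjugation of `ρ` by `g`. -/
theorem exists_unique_projective_extension [FiniteDimensional ℂ V]
    (A : Subgroup G) (hA : A.Normal) (ρ : A →* (V ≃ₗᵢ[ℂ] V)) (hρ : IsIrreducibleRep ρ) :
    ∃! Υ : ↥(stab A hA ρ) →* ((V ≃ₗᵢ[ℂ] V) ⧸ ScalarSub V),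
      (∀ (a : G) (ha : a ∈ A) (hs : a ∈ stab A hA ρ),
        Υ ⟨a, hs⟩ = (QuotientGroup.mk (ρ ⟨a, ha⟩) : (V ≃ₗᵢ[ℂ] V) ⧸ ScalarSub V)) ∧
      (∀ (g : ↥(stab A hA ρ)) (u : V ≃ₗᵢ[ℂ] V),
        Υ g = (QuotientGroup.mk u : (V ≃ₗᵢ[ℂ] V) ⧸ ScalarSub V) →
        ∀ a : A, ρ ⟨(g : G)⁻¹ * (a : G) * (g : G), conjMem A hA (g : G) a⟩
          = u⁻¹ * ρ a * u) := by
  refine ⟨Ups A hA ρ hρ, ⟨?_, ?_⟩, ?_⟩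
  · intro a ha hs
    rw [Ups_apply]
    exact impl_unique A hA ρ hρ (implChoice_spec A hA ρ ⟨a, hs⟩) (impl_rho A hA ρ a ha)
  · intro g u hgu
    rw [Ups_apply] at hgu
    exact impl_congr A hA ρ (implChoice_spec A hA ρ g) hgu
  · intro Υ' ⟨h1', h2'⟩
    ext g
    obtain ⟨u, hu⟩ := QuotientGroup.mk_surjective (Υ' g)
    have himpl : Impl A hA ρ (g : G) u := h2' g u hu.symm
    rw [← hu, Ups_apply]
    exact impl_unique A hA ρ hρ himpl (implChoice_spec A hA ρ g)

end
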